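/- For all p ∈ [0,1], ν ∈ [0,1], and s ∈ {+1, −1}, the following identity of operator norms of 2×2 complex matrices holds: ∑_{j ∈ {0,1}} ∑_{k ∈ {0,1}} ‖ (1/2)(I + (−1)^j ν (p σ_x + s(1−p) σ_y)) + (1/2)(I + (−1)^k ν σ_z) ‖ = 4 + 2ν√(2p² − 2p + 2). Consequently, the maximum average success probability of the (2,2,2) random access code played with the disjoint-convex-mixture of the noisy σ_x and σ_y measurements (with weight p and either outcome pairing) against the noisy σ_z measurement equals (2 + ν√(2p² − 2p + 2))/4. -/

import Mathlib

open Matrix Finset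

set_option maxHeartbeats 1000000
set_option synthInstance.maxHeartbeats 1000000

noncomputable section

/-- The Pauli matrix `σ_x`. -/
def σx : Matrix (Fin 2) (Fin 2) ℂ := !![0, 1; 1, 0]

/-- The Pauli matrix `σ_y`. -/
def σy : Matrix (Fin 2) (Fin 2) ℂ := !![0, -Complex.I; Complex.I, 0]

/-- The Pauli matrix `σ_z`. -/
def σz : Matrix (Fin 2) (Fin 2) ℂ := !![1, 0; 0, -1]

/-- The operator norm of a square complex matrix, viewed as an operator on Euclidean space
(for positive semidefinite matrices this is the largest eigenvalue). -/
def opNorm {n : ℕ} (A : Matrix (Fin n) (Fin n) ℂ) : ℝ :=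
  ‖Matrix.toEuclideanCLM (𝕜 := ℂ) A‖

lemma norm_toEuclideanCLM_pauliVec (a b c : ℝ) :
    ‖Matrix.toEuclideanCLM (𝕜 := ℂ)
      (!![(c:ℂ), (a:ℂ) - Complex.I * b; (a:ℂ) + Complex.I * b, -(c:ℂ)])‖
      = Real.sqrt (a^2 + b^2 + c^2) := by
  set N : Matrix (Fin 2) (Fin 2) ℂ :=
    !![(c:ℂ), (a:ℂ) - Complex.I * b; (a:ℂ) + Complex.I * b, -(c:ℂ)] with hN
  have hstar : star N = N := by
    ext i j
    fin_cases i <;> fin_cases j <;>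
      simp [hN, Matrix.conjTranspose_apply, Complex.ext_iff]
  have hsq : N * N = ((a^2 + b^2 + c^2 : ℝ) : ℂ) • (1 : Matrix (Fin 2) (Fin 2) ℂ) := by
    ext i j
    fin_cases i <;> fin_cases j <;>
      simp [hN, Matrix.mul_apply, Fin.sum_univ_two] <;>
      (try ring_nf) <;> (try simp [Complex.I_sq]) <;> (try ring_nf)
  have key : ‖Matrix.toEuclideanCLM (𝕜 := ℂ) N‖ * ‖Matrix.toEuclideanCLM (𝕜 := ℂ) N‖
      = a^2 + b^2 + c^2 := by
    rw [← CStarRing.norm_star_mul_self (x := Matrix.toEuclideanCLM (𝕜 := ℂ) N),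
      ← map_star, hstar, ← _root_.map_mul, hsq, _root_.map_smul, _root_.map_one]
    rw [norm_smul ((( a^2+b^2+c^2 :ℝ):ℂ)) (1 : EuclideanSpace ℂ (Fin 2) →L[ℂ] EuclideanSpace ℂ (Fin 2))]
    simp
    rw [← Complex.ofReal_pow, ← Complex.ofReal_pow, ← Complex.ofReal_pow, ← Complex.ofReal_add,
      ← Complex.ofReal_add, Complex.norm_real, Real.norm_eq_abs, abs_of_nonneg (by positivity)]
  rw [show a^2+b^2+c^2 = ‖Matrix.toEuclideanCLM (𝕜 := ℂ) N‖ * ‖Matrix.toEuclideanCLM (𝕜 := ℂ) N‖ from key.symm,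
    Real.sqrt_mul_self (norm_nonneg _)]

lemma le_opNorm_of_eigen {M : Matrix (Fin 2) (Fin 2) ℂ} {v : Fin 2 → ℂ} {t : ℝ} (ht : 0 ≤ t)
    (hv : v ≠ 0) (h : Matrix.toLin' M v = ((t : ℝ) : ℂ) • v) : t ≤ opNorm M := by
  set x : EuclideanSpace ℂ (Fin 2) := (WithLp.equiv 2 (Fin 2 → ℂ)).symm v with hx
  have hx0 : x ≠ 0 := by
    intro h0
    apply hv
    have := congrArg (WithLp.equiv 2 (Fin 2 → ℂ)) h0
    simpa [hx] using this
  have hfx : Matrix.toEuclideanCLM (𝕜 := ℂ) M x = ((t : ℝ) : ℂ) • x := by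
    rw [hx, WithLp.equiv_symm_apply, Matrix.toEuclideanCLM_toLp, ← Matrix.toLin'_apply, h]
    simp
  have h1 : ‖Matrix.toEuclideanCLM (𝕜 := ℂ) M x‖ = t * ‖x‖ := by
    rw [hfx, norm_smul, Complex.norm_real, Real.norm_eq_abs, abs_of_nonneg ht]
  have h2 := (Matrix.toEuclideanCLM (𝕜 := ℂ) M).le_opNorm x
  rw [h1] at h2
  have hxpos : 0 < ‖x‖ := norm_pos_iff.mpr hx0
  have h3 : t * ‖x‖ ≤ opNorm M * ‖x‖ := h2
  exact le_of_mul_le_mul_right h3 hxpos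

lemma opNorm_pauli_form (a b c : ℝ) :
    opNorm !![1 + (c:ℂ), (a:ℂ) - Complex.I * b; (a:ℂ) + Complex.I * b, 1 - (c:ℂ)]
      = 1 + Real.sqrt (a^2 + b^2 + c^2) := by
  set r := Real.sqrt (a^2 + b^2 + c^2) with hrdef
  have hr0 : 0 ≤ r := Real.sqrt_nonneg _
  have hr2 : r^2 = a^2 + b^2 + c^2 := Real.sq_sqrt (by positivity)
  have hC : (r:ℂ)^2 = (a:ℂ)^2 + (b:ℂ)^2 + (c:ℂ)^2 := by exact_mod_cast congrArg Complex.ofReal hr2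
  clear_value r
  set M : Matrix (Fin 2) (Fin 2) ℂ :=
    !![1 + (c:ℂ), (a:ℂ) - Complex.I * b; (a:ℂ) + Complex.I * b, 1 - (c:ℂ)] with hM
  have hdecomp : M = 1 +
      !![(c:ℂ), (a:ℂ) - Complex.I * b; (a:ℂ) + Complex.I * b, -(c:ℂ)] := by
    ext i j
    fin_cases i <;> fin_cases j <;> simp [hM, Matrix.one_apply] <;> ring
  have hupper : opNorm M ≤ 1 + r := by
    rw [opNorm, hdecomp, map_add, _root_.map_one]
    refine (norm_add_le _ _).trans ?_
    rw [norm_toEuclideanCLM_pauliVec]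
    have : ‖(1 : EuclideanSpace ℂ (Fin 2) →L[ℂ] EuclideanSpace ℂ (Fin 2))‖ = 1 := norm_one
    rw [this, hrdef]
  have hlower : 1 + r ≤ opNorm M := by
    rcases le_or_gt 0 c with hc | hc
    · rcases eq_or_lt_of_le hr0 with hr0' | hrpos
      · -- r = 0, so a = b = c = 0 and M = 1
        have habc : a^2 + b^2 + c^2 = 0 := by
          have := hr2; rw [← hr0'] at this; simpa using this.symm
        have ha : a = 0 := by nlinarith [sq_nonneg a, sq_nonneg b, sq_nonneg c]
        have hb : b = 0 := by nlinarith [sq_nonneg a, sq_nonneg b, sq_nonneg c]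
        have hc0 : c = 0 := by nlinarith [sq_nonneg a, sq_nonneg b, sq_nonneg c]
        have : M = 1 := by
          ext i j
          fin_cases i <;> fin_cases j <;> simp [hM, ha, hb, hc0, Matrix.one_apply]
        rw [this, ← hr0', opNorm, _root_.map_one]
        simp
      · -- eigenvector (c+r, a+ib)
        have hvne : (![((c + r : ℝ) : ℂ), (a:ℂ) + Complex.I * b] : Fin 2 → ℂ) ≠ 0 := by
          intro h0
          rw [funext_iff] at h0
          have h1 := h0 0
          rw [Matrix.cons_val_zero, Pi.zero_apply, Complex.ofReal_eq_zero] at h1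
          nlinarith
        refine le_opNorm_of_eigen (t := 1 + r) (by positivity) hvne ?_
        · funext i
          fin_cases i
          · simp [hM, Matrix.toLin'_apply, Matrix.mulVec, dotProduct, Fin.sum_univ_two]
            push_cast
            linear_combination -hC - (b:ℂ)^2 * Complex.I_sq
          · simp [hM, Matrix.toLin'_apply, Matrix.mulVec, dotProduct, Fin.sum_univ_two]
            push_cast
            ring
    · -- eigenvector (a - ib, r - c)
      have hvne : (![(a:ℂ) - Complex.I * b, ((r - c : ℝ) : ℂ)] : Fin 2 → ℂ) ≠ 0 := by
        intro h0
        rw [funext_iff] at h0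
        have h1 := h0 1
        rw [Matrix.cons_val_one, Matrix.cons_val_zero, Pi.zero_apply, Complex.ofReal_eq_zero] at h1
        nlinarith
      refine le_opNorm_of_eigen (t := 1 + r) (by positivity) hvne ?_
      · funext i
        fin_cases i
        · simp [hM, Matrix.toLin'_apply, Matrix.mulVec, dotProduct, Fin.sum_univ_two]
          push_cast
          ring
        · simp [hM, Matrix.toLin'_apply, Matrix.mulVec, dotProduct, Fin.sum_univ_two]
          push_cast
          linear_combination -hC - (b:ℂ)^2 * Complex.I_sq
  exact le_antisymm hupper hlower

/-- The success-probability identity for the `(2,2,2)` random access code played with the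
disjoint-convex-mixture (weight `p`, outcome pairing `s`) of the noisy `σ_x` and `σ_y`
measurements against the noisy `σ_z` measurement. -/
theorem rac_success_probability_identity
    (p ν : ℝ) (hp : p ∈ Set.Icc (0 : ℝ) 1) (hν : ν ∈ Set.Icc (0 : ℝ) 1)
    (s : ℝ) (hs : s ∈ ({1, -1} : Set ℝ)) :
    ∑ j : Fin 2, ∑ k : Fin 2,
      opNorm ((1/2 : ℂ) • (1 + ((-1 : ℂ)) ^ (j : ℕ) •
          ((ν : ℂ) • ((p : ℂ) • σx + ((s * (1 - p) : ℝ) : ℂ) • σy))) +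
        (1/2 : ℂ) • (1 + ((-1 : ℂ)) ^ (k : ℕ) • ((ν : ℂ) • σz)))
      = 4 + 2 * ν * Real.sqrt (2 * p ^ 2 - 2 * p + 2) := by
  have hs2 : s^2 = 1 := by rcases hs with h | h <;> simp_all
  have hν0 : 0 ≤ ν := hν.1
  -- each term equals 1 + (ν/2) √(2p²-2p+2)
  have hterm : ∀ j k : Fin 2,
      opNorm ((1/2 : ℂ) • (1 + ((-1 : ℂ)) ^ (j : ℕ) •
          ((ν : ℂ) • ((p : ℂ) • σx + ((s * (1 - p) : ℝ) : ℂ) • σy))) +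
        (1/2 : ℂ) • (1 + ((-1 : ℂ)) ^ (k : ℕ) • ((ν : ℂ) • σz)))
      = 1 + (ν/2) * Real.sqrt (2 * p ^ 2 - 2 * p + 2) := by
    intro j k
    obtain ⟨εj, hεj, hεj2⟩ : ∃ ε : ℝ, ((-1 : ℂ)) ^ (j : ℕ) = (ε : ℂ) ∧ ε^2 = 1 := by
      fin_cases j
      · exact ⟨1, by norm_num, by norm_num⟩
      · exact ⟨-1, by norm_num, by norm_num⟩
    obtain ⟨εk, hεk, hεk2⟩ : ∃ ε : ℝ, ((-1 : ℂ)) ^ (k : ℕ) = (ε : ℂ) ∧ ε^2 = 1 := by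
      fin_cases k
      · exact ⟨1, by norm_num, by norm_num⟩
      · exact ⟨-1, by norm_num, by norm_num⟩
    have hmat : ((1/2 : ℂ) • (1 + ((-1 : ℂ)) ^ (j : ℕ) •
          ((ν : ℂ) • ((p : ℂ) • σx + ((s * (1 - p) : ℝ) : ℂ) • σy))) +
        (1/2 : ℂ) • (1 + ((-1 : ℂ)) ^ (k : ℕ) • ((ν : ℂ) • σz)))
        = !![1 + ((εk * ν / 2 : ℝ) : ℂ),
             ((εj * ν * p / 2 : ℝ) : ℂ) - Complex.I * ((εj * ν * s * (1-p) / 2 : ℝ) : ℂ);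
             ((εj * ν * p / 2 : ℝ) : ℂ) + Complex.I * ((εj * ν * s * (1-p) / 2 : ℝ) : ℂ),
             1 - ((εk * ν / 2 : ℝ) : ℂ)] := by
      rw [hεj, hεk]
      ext i l
      fin_cases i <;> fin_cases l <;>
        simp [σx, σy, σz, Matrix.one_apply] <;> push_cast <;> ring
    rw [hmat, opNorm_pauli_form]
    congr 1
    rw [show (εj * ν * p / 2)^2 + (εj * ν * s * (1-p) / 2)^2 + (εk * ν / 2)^2
        = (ν/2)^2 * (2 * p ^ 2 - 2 * p + 2) by linear_combination (ν^2/4*(p^2 + (1-p)^2*s^2))*hεj2 + (ν^2/4*(1-p)^2)*hs2 + (ν^2/4)*hεk2,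
      Real.sqrt_mul (by positivity), Real.sqrt_sq (by positivity)]
  rw [Fin.sum_univ_two, Fin.sum_univ_two, Fin.sum_univ_two,
    hterm 0 0, hterm 0 1, hterm 1 0, hterm 1 1]
  ring
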